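/- arXiv:1111.6195 — 2 statements merged into one kernel-verified Lean document; each statement's English description precedes it below -/
import Mathlib

section
/- With H(q,t,a) as in the hook super-polynomial of the trefoil, one has the identity in ℚ(t)[a]: H(1, t, a) = (1 + a + t)(a² + a(1 + t + t² + t³) + t(1 + t + t² + t⁴))/t. -/
/-- `H = HD_{3,2}(ω₁+ω₂; q,t,a)`, the hook super-polynomial of the trefoil,
as a function of field elements. -/
def Hhook {K : Type*} [Field K] (q t a : K) : K :=
  1 + a ^ 3 * q ^ 6 / t + 2 * q * t - q * t ^ 2 + 2 * q ^ 2 * t ^ 2 +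
    q ^ 3 * t ^ 2 - q ^ 2 * t ^ 3 + 2 * q ^ 3 * t ^ 3 - q ^ 3 * t ^ 4 +
    2 * q ^ 4 * t ^ 4 + q ^ 5 * t ^ 5 +
    a * (2 * q ^ 2 + q ^ 3 + q / t - q ^ 2 * t + 3 * q ^ 3 * t + q ^ 4 * t -
      q ^ 3 * t ^ 2 + 3 * q ^ 4 * t ^ 2 + q ^ 5 * t ^ 2 - q ^ 4 * t ^ 3 +
      2 * q ^ 5 * t ^ 3 + q ^ 6 * t ^ 4) +
    a ^ 2 * (q ^ 4 + q ^ 5 + q ^ 3 / t + q ^ 4 / t - q ^ 4 * t + q ^ 5 * t +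
      q ^ 6 * t + q ^ 6 * t ^ 2)

theorem stmt_15 :
    let t : RatFunc ℚ := RatFunc.X
    ∀ a : RatFunc ℚ,
      Hhook 1 t a =
        (1 + a + t) *
          (a ^ 2 + a * (1 + t + t ^ 2 + t ^ 3) + t * (1 + t + t ^ 2 + t ^ 4)) / t := by
  intro t a
  have ht : t ≠ 0 := RatFunc.X_ne_zero
  unfold Hhook
  field_simp
  ring
end

section
/- There is no sequence of pairs (a₁,b₁),…,(a₆,b₆) of integers such that, as multisets, {a₁,…,a₆} = {-3,-2,-1,-1,0,0}, {b₁,…,b₆} = {0,0,1,1,2,3}, and {a₁+b₁,…,a₆+b₆} = {-3,-2,-1,1,2,3}. -/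
lemma sum_comp_aux {a : Fin 6 → ℤ} {M : Multiset ℤ}
    (h : Finset.univ.val.map a = M) (f : ℤ → ℤ) :
    ∑ i, f (a i) = (M.map f).sum := by
  rw [← h, Multiset.map_map]
  rfl

theorem stmt_17 :
    ¬ ∃ a b : Fin 6 → ℤ,
      (Finset.univ.val.map a = ({-3, -2, -1, -1, 0, 0} : Multiset ℤ)) ∧
      (Finset.univ.val.map b = ({0, 0, 1, 1, 2, 3} : Multiset ℤ)) ∧
      (Finset.univ.val.map (fun i => a i + b i) =
        ({-3, -2, -1, 1, 2, 3} : Multiset ℤ)) := by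
  rintro ⟨a, b, ha, hb, hab⟩
  -- sums of squares
  have hsa : ∑ i, (a i)^2 = 15 := by
    rw [sum_comp_aux ha (fun x => x^2)]; decide
  have hsb : ∑ i, (b i)^2 = 15 := by
    rw [sum_comp_aux hb (fun x => x^2)]; decide
  have hsab : ∑ i, (a i + b i)^2 = 28 := by
    rw [sum_comp_aux hab (fun x => x^2)]; decide
  -- zero counts via indicator sums
  have hza : ∑ i, (if a i = 0 then (1:ℤ) else 0) = 2 := by
    rw [sum_comp_aux ha (fun x => if x = 0 then (1:ℤ) else 0)]; decide
  have hzb : ∑ i, (if b i = 0 then (1:ℤ) else 0) = 2 := by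
    rw [sum_comp_aux hb (fun x => if x = 0 then (1:ℤ) else 0)]; decide
  -- ∑ a i * b i = -1
  have hprod : ∑ i, a i * b i = -1 := by
    have h : ∑ i, (a i + b i)^2 = ∑ i, (a i)^2 + ∑ i, (b i)^2 + 2 * ∑ i, a i * b i := by
      rw [← Finset.sum_add_distrib, Finset.mul_sum, ← Finset.sum_add_distrib]
      apply Finset.sum_congr rfl
      intro i _
      ring
    rw [hsa, hsb, hsab] at h
    linarith
  -- pointwise bounds
  have hA : ∀ i, a i ≤ 0 := by
    intro i
    have hm : a i ∈ Finset.univ.val.map a :=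
      Multiset.mem_map_of_mem a (Finset.mem_univ i)
    rw [ha] at hm
    simp only [Multiset.insert_eq_cons, Multiset.mem_cons, Multiset.mem_singleton] at hm
    rcases hm with h|h|h|h|h|h <;> omega
  have hB : ∀ i, 0 ≤ b i := by
    intro i
    have hm : b i ∈ Finset.univ.val.map b :=
      Multiset.mem_map_of_mem b (Finset.mem_univ i)
    rw [hb] at hm
    simp only [Multiset.insert_eq_cons, Multiset.mem_cons, Multiset.mem_singleton] at hm
    rcases hm with h|h|h|h|h|h <;> omega
  -- key pointwise inequality
  have hkey : ∀ i, a i * b i + 1 ≤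
      (if a i = 0 then (1:ℤ) else 0) + (if b i = 0 then (1:ℤ) else 0) := by
    intro i
    rcases eq_or_ne (a i) 0 with h0 | h0
    · simp [h0]; positivity
    · rcases eq_or_ne (b i) 0 with h1 | h1
      · simp [h1]
        split <;> norm_num
      · have ha' : a i ≤ -1 := by have := hA i; omega
        have hb' : 1 ≤ b i := by have := hB i; omega
        simp [h0, h1]
        nlinarith
  have hsum := Finset.sum_le_sum (fun i (_ : i ∈ Finset.univ) => hkey i)
  rw [Finset.sum_add_distrib, Finset.sum_add_distrib, hprod, hza, hzb] at hsum
  simp at hsum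
end
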